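/- Let P be a finite connected poset with at least two points, and let C ⊆ E(P) be a crown with strictly more than four points. Then C is a retract of P if and only if C is a retract of E(P). -/

import Mathlib

def ConnectedPoset (α : Type*) [PartialOrder α] : Prop :=
  ∀ a b : α, Relation.ReflTransGen (fun u v : α => u ≤ v ∨ v ≤ u) a b

/-- The set of extremal points of a poset. -/
def EP (α : Type*) [PartialOrder α] : Set α := {z | IsMin z ∨ IsMax z}

/-- Comparability of two (distinct) points. -/
def Comp {α : Type*} [PartialOrder α] (x y : α) : Prop := x ≠ y ∧ (x ≤ y ∨ y ≤ x)

/-- `S` is a crown: it has at least 4 points and its comparability graph is a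
cycle, i.e. it is 2-regular and connected. -/
def IsCrown {α : Type*} [PartialOrder α] (S : Set α) : Prop :=
  4 ≤ S.ncard ∧
  (∀ x ∈ S, {y | y ∈ S ∧ Comp x y}.ncard = 2) ∧
  ∀ x ∈ S, ∀ y ∈ S,
    Relation.ReflTransGen (fun u v : α => u ∈ S ∧ v ∈ S ∧ Comp u v) x y

/-- `C` is a retract of the whole poset. -/
def IsRetract {α : Type*} [PartialOrder α] (C : Set α) : Prop :=
  ∃ r : α → α, Monotone r ∧ (∀ z, r (r z) = r z) ∧ Set.range r = C

/-- `C` is a retract of the induced subposet on `S`. -/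
def IsRetractOfSub {α : Type*} [PartialOrder α] (S C : Set α) : Prop :=
  C ⊆ S ∧ ∃ r : S → S, Monotone r ∧ (∀ z, r (r z) = r z) ∧
    Subtype.val '' Set.range r = C

section CrownAux

variable {α : Type*} [PartialOrder α] [Fintype α]

omit [Fintype α] in
lemma comp_symm {x y : α} (h : Comp x y) : Comp y x := ⟨h.1.symm, h.2.symm⟩

lemma exists_isMin_le (z : α) : ∃ m, IsMin m ∧ m ≤ z := by
  obtain ⟨m, hm, hmin⟩ := Set.Finite.exists_minimalFor id {x | x ≤ z}
    (Set.toFinite _) ⟨z, le_rfl⟩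
  refine ⟨m, fun b hb => ?_, hm⟩
  exact hmin (le_trans hb hm) hb

lemma exists_le_isMax (z : α) : ∃ M, IsMax M ∧ z ≤ M := by
  obtain ⟨m, hm, hmax⟩ := Set.Finite.exists_maximalFor id {x | z ≤ x}
    (Set.toFinite _) ⟨z, le_rfl⟩
  refine ⟨m, fun b hb => ?_, hm⟩
  exact hmax (le_trans hm hb) hb

lemma crown_nbhd {C : Set α} (hC : IsCrown C) {x y1 y2 : α} (hx : x ∈ C)
    (hy1 : y1 ∈ C) (hy2 : y2 ∈ C) (h12 : y1 ≠ y2)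
    (c1 : Comp x y1) (c2 : Comp x y2) :
    ∀ y ∈ C, Comp x y → y = y1 ∨ y = y2 := by
  have hN : {y | y ∈ C ∧ Comp x y}.ncard = 2 := hC.2.1 x hx
  have hsub : ({y1, y2} : Set α) ⊆ {y | y ∈ C ∧ Comp x y} := by
    rintro y (rfl | rfl)
    · exact ⟨hy1, c1⟩
    · exact ⟨hy2, c2⟩
  have heq : ({y1, y2} : Set α) = {y | y ∈ C ∧ Comp x y} :=
    Set.eq_of_subset_of_ncard_le hsub (by rw [hN, Set.ncard_pair h12]) (Set.toFinite _)
  intro y hy hcy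
  have hy' : y ∈ {y | y ∈ C ∧ Comp x y} := ⟨hy, hcy⟩
  rw [← heq] at hy'
  simpa using hy'

lemma crown_closed {C : Set α} (hC : IsCrown C) (T : Set α) {x0 : α}
    (hx0C : x0 ∈ C) (hx0T : x0 ∈ T)
    (hcl : ∀ x ∈ C, x ∈ T → ∀ y ∈ C, Comp x y → y ∈ T) : C ⊆ T := by
  intro c hc
  have hpath := hC.2.2 x0 hx0C c hc
  clear hc
  induction hpath with
  | refl => exact hx0T
  | tail _ h2 ih => exact hcl _ h2.1 ih _ h2.2.1 h2.2.2

lemma crown_three {C : Set α} (hC : IsCrown C) (hcard : 4 < C.ncard)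
    {x y z : α} (hx : x ∈ C) (hy : y ∈ C) (hz : z ∈ C)
    (cxy : Comp x y) (cxz : Comp x z) (cyz : Comp y z) : False := by
  have hsub : C ⊆ ({x, y, z} : Set α) := by
    refine crown_closed hC _ hx (by simp) ?_
    intro w hw hwT v hv hcomp
    simp only [Set.mem_insert_iff, Set.mem_singleton_iff] at hwT ⊢
    rcases hwT with rfl | rfl | rfl
    · rcases crown_nbhd hC hw hy hz cyz.1 cxy cxz v hv hcomp with rfl | rfl
      · exact Or.inr (Or.inl rfl)
      · exact Or.inr (Or.inr rfl)
    · rcases crown_nbhd hC hw hx hz cxz.1 (comp_symm cxy) cyz v hv hcomp with rfl | rfl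
      · exact Or.inl rfl
      · exact Or.inr (Or.inr rfl)
    · rcases crown_nbhd hC hw hx hy cxy.1 (comp_symm cxz) (comp_symm cyz) v hv hcomp
        with rfl | rfl
      · exact Or.inl rfl
      · exact Or.inr (Or.inl rfl)
  have h3 : ({x, y, z} : Set α).ncard ≤ 3 := by
    calc ({x, y, z} : Set α).ncard ≤ ({y, z} : Set α).ncard + 1 := Set.ncard_insert_le _ _
    _ ≤ (({z} : Set α).ncard + 1) + 1 := by
        exact Nat.add_le_add_right (Set.ncard_insert_le _ _) 1
    _ = 3 := by rw [Set.ncard_singleton]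
  have := Set.ncard_le_ncard hsub (Set.toFinite _)
  omega

lemma crown_four {C : Set α} (hC : IsCrown C) (hcard : 4 < C.ncard)
    {a1 a2 b1 b2 : α} (ha1 : a1 ∈ C) (ha2 : a2 ∈ C) (hb1 : b1 ∈ C) (hb2 : b2 ∈ C)
    (hbb : b1 ≠ b2)
    (c11 : Comp a1 b1) (c12 : Comp a1 b2) (c21 : Comp a2 b1) (c22 : Comp a2 b2)
    (haa : a1 ≠ a2) : False := by
  have hsub : C ⊆ ({a1, a2, b1, b2} : Set α) := by
    refine crown_closed hC _ ha1 (by simp) ?_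
    intro w hw hwT v hv hcomp
    simp only [Set.mem_insert_iff, Set.mem_singleton_iff] at hwT ⊢
    rcases hwT with rfl | rfl | rfl | rfl
    · rcases crown_nbhd hC hw hb1 hb2 hbb c11 c12 v hv hcomp with rfl | rfl
      · exact Or.inr (Or.inr (Or.inl rfl))
      · exact Or.inr (Or.inr (Or.inr rfl))
    · rcases crown_nbhd hC hw hb1 hb2 hbb c21 c22 v hv hcomp with rfl | rfl
      · exact Or.inr (Or.inr (Or.inl rfl))
      · exact Or.inr (Or.inr (Or.inr rfl))
    · rcases crown_nbhd hC hw ha1 ha2 haa (comp_symm c11) (comp_symm c21) v hv hcomp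
        with rfl | rfl
      · exact Or.inl rfl
      · exact Or.inr (Or.inl rfl)
    · rcases crown_nbhd hC hw ha1 ha2 haa (comp_symm c12) (comp_symm c22) v hv hcomp
        with rfl | rfl
      · exact Or.inl rfl
      · exact Or.inr (Or.inl rfl)
  have h4 : ({a1, a2, b1, b2} : Set α).ncard ≤ 4 := by
    calc ({a1, a2, b1, b2} : Set α).ncard
        ≤ ({a2, b1, b2} : Set α).ncard + 1 := Set.ncard_insert_le _ _
    _ ≤ (({b1, b2} : Set α).ncard + 1) + 1 :=
        Nat.add_le_add_right (Set.ncard_insert_le _ _) 1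
    _ ≤ ((({b2} : Set α).ncard + 1) + 1) + 1 :=
        Nat.add_le_add_right (Nat.add_le_add_right (Set.ncard_insert_le _ _) 1) 1
    _ = 4 := by rw [Set.ncard_singleton]
  have := Set.ncard_le_ncard hsub (Set.toFinite _)
  omega

/-- In a crown with more than 4 points, two distinct points have at most one
common upper bound inside the crown. -/
lemma crown_ub {C : Set α} (hC : IsCrown C) (hcard : 4 < C.ncard)
    {a1 a2 b1 b2 : α} (ha1 : a1 ∈ C) (ha2 : a2 ∈ C) (hb1 : b1 ∈ C) (hb2 : b2 ∈ C)
    (haa : a1 ≠ a2) (h11 : a1 ≤ b1) (h12 : a1 ≤ b2) (h21 : a2 ≤ b1) (h22 : a2 ≤ b2) :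
    b1 = b2 := by
  by_contra hbb
  by_cases e1 : a1 = b1
  · subst e1
    -- a2 < a1 ≤ b2, trio {a1, a2, b2}
    have hne2 : a2 ≠ b2 := by rintro rfl; exact haa (le_antisymm h12 h21)
    exact crown_three hC hcard ha1 ha2 hb2
      ⟨haa, Or.inr h21⟩ ⟨hbb, Or.inl h12⟩ ⟨hne2, Or.inl h22⟩
  by_cases e2 : a1 = b2
  · subst e2
    have hne2 : a2 ≠ b1 := by rintro rfl; exact haa (le_antisymm h11 h22)
    exact crown_three hC hcard ha1 ha2 hb1
      ⟨haa, Or.inr h22⟩ ⟨e1, Or.inl h11⟩ ⟨hne2, Or.inl h21⟩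
  by_cases e3 : a2 = b1
  · subst e3
    exact crown_three hC hcard ha2 ha1 hb2
      ⟨haa.symm, Or.inr h11⟩ ⟨hbb, Or.inl h22⟩ ⟨e2, Or.inl h12⟩
  by_cases e4 : a2 = b2
  · subst e4
    exact crown_three hC hcard ha2 ha1 hb1
      ⟨haa.symm, Or.inr h12⟩ ⟨Ne.symm hbb, Or.inl h21⟩ ⟨e1, Or.inl h11⟩
  · exact crown_four hC hcard ha1 ha2 hb1 hb2 hbb
      ⟨e1, Or.inl h11⟩ ⟨e2, Or.inl h12⟩ ⟨e3, Or.inl h21⟩ ⟨e4, Or.inl h22⟩ haa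

end CrownAux

/-- a crown `C ⊆ E(P)` with more than four points is a retract
of `P` iff it is a retract of `E(P)`. -/
theorem stmt6 {α : Type*} [PartialOrder α] [Fintype α]
    (hconn : ConnectedPoset α) (htwo : ∃ x y : α, x ≠ y)
    (C : Set α) (hCE : C ⊆ EP α) (hC : IsCrown C) (hcard : 4 < C.ncard) :
    IsRetract C ↔ IsRetractOfSub (EP α) C := by
  classical
  have hne : Nonempty α := ⟨htwo.choose⟩
  constructor
  · rintro ⟨r, hmono, hidem, hrange⟩
    refine ⟨hCE, ?_⟩
    have hrC : ∀ z : α, r z ∈ C := fun z => hrange ▸ Set.mem_range_self z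
    have hrE : ∀ z : α, r z ∈ EP α := fun z => hCE (hrC z)
    refine ⟨fun z => ⟨r z.1, hrE z.1⟩, fun a b hab => ?_, fun z => ?_, ?_⟩
    · exact hmono hab
    · exact Subtype.ext (hidem z.1)
    · ext c
      constructor
      · rintro ⟨w, ⟨x, rfl⟩, rfl⟩
        exact hrC x.1
      · intro hc
        have hcE : c ∈ EP α := hCE hc
        obtain ⟨w, hw⟩ : c ∈ Set.range r := hrange.symm ▸ hc
        refine ⟨⟨r c, hrE c⟩, ⟨⟨c, hcE⟩, rfl⟩, ?_⟩
        show r c = c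
        rw [← hw, hidem]
  · rintro ⟨hsub, r, hmono, hidem, hrange⟩
    -- extend the retraction r : EP α → EP α to all of α
    set R : α → α := fun z => if hz : z ∈ EP α then (r ⟨z, hz⟩ : α) else z with hRdef
    have hRval : ∀ (z : α) (hz : z ∈ EP α), R z = (r ⟨z, hz⟩ : α) := by
      intro z hz; simp only [hRdef, dif_pos hz]
    have hRC : ∀ (z : α), z ∈ EP α → R z ∈ C := by
      intro z hz
      rw [hRval z hz, ← hrange]
      exact ⟨r ⟨z, hz⟩, Set.mem_range_self _, rfl⟩
    have hRfix : ∀ c ∈ C, R c = c := by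
      intro c hc
      have hcE : c ∈ EP α := hCE hc
      obtain ⟨w, ⟨x, rfl⟩, hw⟩ : c ∈ Subtype.val '' Set.range r := hrange.symm ▸ hc
      have : (⟨c, hcE⟩ : EP α) = r x := Subtype.ext hw.symm
      rw [hRval c hcE, this, hidem, hw]
    have hRmono : ∀ z z' : α, z ∈ EP α → z' ∈ EP α → z ≤ z' → R z ≤ R z' := by
      intro z z' hz hz' h
      rw [hRval z hz, hRval z' hz']
      exact hmono (show (⟨z, hz⟩ : EP α) ≤ ⟨z', hz'⟩ from h)
    set A : α → Set α := fun z => R '' {m | IsMin m ∧ m ≤ z} with hAdef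
    set B : α → Set α := fun z => R '' {M | IsMax M ∧ z ≤ M} with hBdef
    have hAC : ∀ z, A z ⊆ C := by
      rintro z _ ⟨m, hm, rfl⟩
      exact hRC m (Or.inl hm.1)
    have hBC : ∀ z, B z ⊆ C := by
      rintro z _ ⟨M, hM, rfl⟩
      exact hRC M (Or.inr hM.1)
    have hAne : ∀ z, (A z).Nonempty := by
      intro z
      obtain ⟨m, hm, hmz⟩ := exists_isMin_le z
      exact ⟨R m, ⟨m, ⟨hm, hmz⟩, rfl⟩⟩
    have hBne : ∀ z, (B z).Nonempty := by
      intro z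
      obtain ⟨M, hM, hMz⟩ := exists_le_isMax z
      exact ⟨R M, ⟨M, ⟨hM, hMz⟩, rfl⟩⟩
    have hAB : ∀ z, ∀ a ∈ A z, ∀ b ∈ B z, a ≤ b := by
      rintro z _ ⟨m, hm, rfl⟩ _ ⟨M, hM, rfl⟩
      exact hRmono m M (Or.inl hm.1) (Or.inr hM.1) (hm.2.trans hM.2)
    have hAmono : ∀ z z' : α, z ≤ z' → A z ⊆ A z' := by
      rintro z z' h _ ⟨m, hm, rfl⟩
      exact ⟨m, ⟨hm.1, hm.2.trans h⟩, rfl⟩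
    have hBanti : ∀ z z' : α, z ≤ z' → B z' ⊆ B z := by
      rintro z z' h _ ⟨M, hM, rfl⟩
      exact ⟨M, ⟨hM.1, h.trans hM.2⟩, rfl⟩
    have hBsing : ∀ z, ¬ (A z).Subsingleton → (B z).Subsingleton := by
      intro z hA b1 hb1 b2 hb2
      rw [Set.not_subsingleton_iff, Set.nontrivial_iff_exists_ne (hAne z).some_mem] at hA
      obtain ⟨a2, ha2, hne⟩ := hA
      have ha1 := (hAne z).some_mem
      exact crown_ub hC hcard (hAC z ha1) (hAC z ha2) (hBC z hb1) (hBC z hb2)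
        (fun h => hne h.symm) (hAB z _ ha1 _ hb1) (hAB z _ ha1 _ hb2)
        (hAB z _ ha2 _ hb1) (hAB z _ ha2 _ hb2)
    set g : α → α := fun z =>
      if hz : z ∈ EP α then R z
      else if (A z).Subsingleton then Classical.epsilon (· ∈ A z)
      else Classical.epsilon (· ∈ B z) with hgdef
    have hgE : ∀ (z : α), z ∈ EP α → g z = R z := by
      intro z hz; simp only [hgdef, dif_pos hz]
    have hgA : ∀ (z : α), z ∉ EP α → (A z).Subsingleton → g z ∈ A z := by
      intro z hz hs
      have : g z = Classical.epsilon (· ∈ A z) := by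
        simp only [hgdef, dif_neg hz, if_pos hs]
      rw [this]
      exact Classical.epsilon_spec (p := (· ∈ A z)) (hAne z)
    have hgB : ∀ (z : α), z ∉ EP α → ¬ (A z).Subsingleton → g z ∈ B z := by
      intro z hz hs
      have : g z = Classical.epsilon (· ∈ B z) := by
        simp only [hgdef, dif_neg hz, if_neg hs]
      rw [this]
      exact Classical.epsilon_spec (p := (· ∈ B z)) (hBne z)
    have hgC : ∀ z, g z ∈ C := by
      intro z
      by_cases hz : z ∈ EP α
      · rw [hgE z hz]; exact hRC z hz
      by_cases hs : (A z).Subsingleton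
      · exact hAC z (hgA z hz hs)
      · exact hBC z (hgB z hz hs)
    have hgfix : ∀ c ∈ C, g c = c := by
      intro c hc
      rw [hgE c (hCE hc)]
      exact hRfix c hc
    refine ⟨g, ?_, fun z => hgfix _ (hgC z), ?_⟩
    · -- monotone
      intro z z' h
      by_cases hz : z ∈ EP α
      · by_cases hz' : z' ∈ EP α
        · rw [hgE z hz, hgE z' hz']
          exact hRmono z z' hz hz' h
        · -- z extremal, z' not; z must be minimal
          have hzmin : IsMin z := by
            rcases hz with hmin | hmax
            · exact hmin
            · exact absurd (show z' ∈ EP α by rw [le_antisymm (hmax h) h]; exact Or.inr hmax) hz'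
          have hmem : R z ∈ A z' := ⟨z, ⟨hzmin, h⟩, rfl⟩
          rw [hgE z hz]
          by_cases hs : (A z').Subsingleton
          · exact le_of_eq (hs hmem (hgA z' hz' hs))
          · exact hAB z' _ hmem _ (hgB z' hz' hs)
      · by_cases hz' : z' ∈ EP α
        · -- z' extremal, z not; z' must be maximal
          have hz'max : IsMax z' := by
            rcases hz' with hmin | hmax
            · exact absurd (show z ∈ EP α by rw [le_antisymm h (hmin h)]; exact Or.inl hmin) hz
            · exact hmax
          have hmem : R z' ∈ B z := ⟨z', ⟨hz'max, h⟩, rfl⟩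
          rw [hgE z' hz']
          by_cases hs : (A z).Subsingleton
          · exact hAB z _ (hgA z hz hs) _ hmem
          · exact le_of_eq (hBsing z hs (hgB z hz hs) hmem)
        · -- both non-extremal
          by_cases hs : (A z).Subsingleton
          · by_cases hs' : (A z').Subsingleton
            · have h1 : g z ∈ A z' := hAmono z z' h (hgA z hz hs)
              exact le_of_eq (hs' h1 (hgA z' hz' hs'))
            · have h1 : g z ∈ A z' := hAmono z z' h (hgA z hz hs)
              exact hAB z' _ h1 _ (hgB z' hz' hs')
          · have hs' : ¬ (A z').Subsingleton := fun hh =>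
              hs (hh.anti (hAmono z z' h))
            have h1 : g z' ∈ B z := hBanti z z' h (hgB z' hz' hs')
            exact le_of_eq (hBsing z hs (hgB z hz hs) h1)
    · -- range
      apply Set.eq_of_subset_of_subset
      · rintro _ ⟨z, rfl⟩; exact hgC z
      · intro c hc
        exact ⟨c, hgfix c hc⟩
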